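/- Let p, q be positive integers, ω_p, ω_q primitive p-th and q-th roots of unity in ℂ, α : (ZMod p) × (ZMod q) → ℂ, and B = Σ_{(i,j)} α(i,j) (J_p^i ⊗ J_q^j). Then for every t ∈ ℝ, the matrix exponential of tB has entries (exp(tB))_{(i,j),(m,n)} = (1/(pq)) Φ_{m-i,n-j}(t), where Φ_{a,b}(t) = Σ_{(k,l)} ω_p^{ak} ω_q^{bl} exp(t λ_{kl}) and λ_{kl} = Σ_{(i,j)} α(i,j) ω̄_p^{ik} ω̄_q^{jl}. -/

import Mathlib

open Matrix Kronecker

noncomputable section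

/-- The primary permutation (left-shift) matrix `J_p`. -/
def Jmat (p : ℕ) : Matrix (ZMod p) (ZMod p) ℂ :=
  Matrix.of fun i j => if j = i + 1 then 1 else 0

namespace Stmt4Aux

variable {n : ℕ} [NeZero n] {ζ : ℂ}

set_option linter.unusedSectionVars false in
lemma pow_mod (hζ : IsPrimitiveRoot ζ n) (m : ℕ) : ζ ^ m = ζ ^ (m % n) := by
  conv_lhs => rw [← Nat.div_add_mod m n]
  rw [pow_add, pow_mul, hζ.pow_eq_one, one_pow, one_mul]

lemma pow_natCast (hζ : IsPrimitiveRoot ζ n) (m : ℕ) :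
    ζ ^ ((m : ZMod n)).val = ζ ^ m := by
  rw [ZMod.val_natCast, ← pow_mod hζ]

lemma e_add (hζ : IsPrimitiveRoot ζ n) (a b : ZMod n) :
    ζ ^ a.val * ζ ^ b.val = ζ ^ (a + b).val := by
  have h : ((a.val + b.val : ℕ) : ZMod n) = a + b := by
    push_cast [ZMod.natCast_zmod_val]; ring
  rw [← pow_add, ← pow_natCast hζ (a.val + b.val), h]

lemma e_mul (hζ : IsPrimitiveRoot ζ n) (a b : ZMod n) :
    ζ ^ (a.val * b.val) = ζ ^ (a * b).val := by
  have h : ((a.val * b.val : ℕ) : ZMod n) = a * b := by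
    push_cast [ZMod.natCast_zmod_val]; ring
  rw [← pow_natCast hζ (a.val * b.val), h]

lemma e_star (hζ : IsPrimitiveRoot ζ n) (a : ZMod n) :
    (star ζ) ^ a.val = ζ ^ (-a).val := by
  have hnorm : ‖ζ‖ = 1 := hζ.norm'_eq_one (NeZero.ne n)
  have hinv : star ζ = ζ⁻¹ := (Complex.inv_eq_conj hnorm).symm
  rw [hinv, inv_pow]
  symm
  refine eq_inv_of_mul_eq_one_left ?_
  rw [e_add hζ]
  simp [ZMod.val_zero]

lemma star_mulval (hζ : IsPrimitiveRoot ζ n) (a b : ZMod n) :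
    (star ζ) ^ (a.val * b.val) = ζ ^ (-(a * b)).val := by
  rw [← star_pow, e_mul hζ, star_pow, e_star hζ]

lemma orth (hζ : IsPrimitiveRoot ζ n) (c : ZMod n) :
    ∑ k : ZMod n, ζ ^ (c * k).val = if c = 0 then (n : ℂ) else 0 := by
  split_ifs with hc
  · subst hc
    simp [ZMod.val_zero, ZMod.card]
  · have hterm : ∀ k : ZMod n, ζ ^ (c * k).val = (ζ ^ c.val) ^ k.val := fun k => by
      rw [← pow_mul, e_mul hζ]
    simp_rw [hterm]
    have hη1 : ζ ^ c.val ≠ 1 :=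
      hζ.pow_ne_one_of_pos_of_lt
        (fun h => hc (by rwa [ZMod.val_eq_zero] at h))
        (ZMod.val_lt c)
    have hηn : (ζ ^ c.val) ^ n = 1 := by
      rw [← pow_mul, mul_comm, pow_mul, hζ.pow_eq_one, one_pow]
    have hre : ∑ k : ZMod n, (ζ ^ c.val) ^ k.val
        = ∑ i ∈ Finset.range n, (ζ ^ c.val) ^ i := by
      apply Finset.sum_nbij' (fun k : ZMod n => k.val) (fun i : ℕ => (i : ZMod n)) <;>
        simp +contextual [ZMod.val_lt, ZMod.natCast_zmod_val, ZMod.val_natCast,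
          Nat.mod_eq_of_lt]
    rw [hre, geom_sum_eq hη1, hηn]
    simp


lemma orth2 {p q : ℕ} [NeZero p] [NeZero q] {ωp ωq : ℂ}
    (hωp : IsPrimitiveRoot ωp p) (hωq : IsPrimitiveRoot ωq q)
    (c : ZMod p) (d : ZMod q) (coef : ℂ) :
    ∑ kl : ZMod p × ZMod q, coef * (ωp ^ (c * kl.1).val * ωq ^ (d * kl.2).val)
      = coef * ((if c = 0 then (p : ℂ) else 0) * (if d = 0 then (q : ℂ) else 0)) := by
  rw [← Finset.mul_sum]
  congr 1
  trans (∑ k : ZMod p, ∑ l : ZMod q, ωp ^ (c * k).val * ωq ^ (d * l).val)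
  · exact Fintype.sum_prod_type _
  · rw [← Finset.sum_mul_sum, orth hωp, orth hωq]

lemma Jpow (p : ℕ) [NeZero p] (k : ℕ) (i j : ZMod p) :
    (Jmat p ^ k) i j = if j = i + (k : ZMod p) then 1 else 0 := by
  induction k generalizing i j with
  | zero => simp [Matrix.one_apply, eq_comm]
  | succ k ih =>
    rw [pow_succ, Matrix.mul_apply]
    simp_rw [ih, Jmat, Matrix.of_apply, boole_mul, Finset.sum_ite_eq']
    simp only [Finset.mem_univ, if_true]
    have : i + ((k : ZMod p) + 1) = (i + (k : ZMod p)) + 1 := by ring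
    push_cast
    rw [this]

end Stmt4Aux

set_option maxHeartbeats 1000000 in
open Stmt4Aux in
theorem stmt4 (p q : ℕ) [NeZero p] [NeZero q] (ωp ωq : ℂ)
    (hωp : IsPrimitiveRoot ωp p) (hωq : IsPrimitiveRoot ωq q)
    (α : ZMod p × ZMod q → ℂ)
    (B : Matrix (ZMod p × ZMod q) (ZMod p × ZMod q) ℂ)
    (hB : B = ∑ ij : ZMod p × ZMod q,
        α ij • ((Jmat p ^ ij.1.val) ⊗ₖ (Jmat q ^ ij.2.val)))
    (lam : ZMod p × ZMod q → ℂ)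
    (hlam : ∀ kl : ZMod p × ZMod q,
      lam kl = ∑ ij : ZMod p × ZMod q,
        α ij * (star ωp) ^ (ij.1.val * kl.1.val) * (star ωq) ^ (ij.2.val * kl.2.val))
    (Φ : ZMod p × ZMod q → ℝ → ℂ)
    (hΦ : ∀ ab t, Φ ab t = ∑ kl : ZMod p × ZMod q,
        ωp ^ (ab.1.val * kl.1.val) * ωq ^ (ab.2.val * kl.2.val) * Complex.exp (t * lam kl)) :
    ∀ (t : ℝ) (i m : ZMod p) (j n : ZMod q),
      NormedSpace.exp ((t : ℂ) • B) (i, j) (m, n) =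
        (1 / ((p : ℂ) * (q : ℂ))) * Φ (m - i, n - j) t := by
  have hp0 : (p : ℂ) ≠ 0 := Nat.cast_ne_zero.2 (NeZero.ne p)
  have hq0 : (q : ℂ) ≠ 0 := Nat.cast_ne_zero.2 (NeZero.ne q)
  set F : Matrix (ZMod p × ZMod q) (ZMod p × ZMod q) ℂ :=
    Matrix.of fun x y => ωp ^ (-(x.1 * y.1)).val * ωq ^ (-(x.2 * y.2)).val with hF
  set G : Matrix (ZMod p × ZMod q) (ZMod p × ZMod q) ℂ :=
    Matrix.of fun x y =>
      (1 / ((p : ℂ) * (q : ℂ))) * (ωp ^ (x.1 * y.1).val * ωq ^ (x.2 * y.2).val) with hG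
  -- F * G = 1
  have hFG : F * G = 1 := by
    ext x y
    rw [Matrix.mul_apply, Matrix.one_apply]
    have hterm : ∀ kl : ZMod p × ZMod q,
        F x kl * G kl y =
          (1 / ((p : ℂ) * (q : ℂ))) *
            (ωp ^ ((y.1 - x.1) * kl.1).val * ωq ^ ((y.2 - x.2) * kl.2).val) := by
      intro kl
      have h1 : ωp ^ (-(x.1 * kl.1)).val * ωp ^ (kl.1 * y.1).val
          = ωp ^ ((y.1 - x.1) * kl.1).val := by
        rw [e_add hωp, show -(x.1 * kl.1) + kl.1 * y.1 = (y.1 - x.1) * kl.1 from by ring]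
      have h2 : ωq ^ (-(x.2 * kl.2)).val * ωq ^ (kl.2 * y.2).val
          = ωq ^ ((y.2 - x.2) * kl.2).val := by
        rw [e_add hωq, show -(x.2 * kl.2) + kl.2 * y.2 = (y.2 - x.2) * kl.2 from by ring]
      show (ωp ^ (-(x.1 * kl.1)).val * ωq ^ (-(x.2 * kl.2)).val) *
          ((1 / ((p : ℂ) * (q : ℂ))) * (ωp ^ (kl.1 * y.1).val * ωq ^ (kl.2 * y.2).val)) = _
      rw [← h1, ← h2]; ring
    rw [Finset.sum_congr rfl fun kl _ => hterm kl, orth2 hωp hωq]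
    by_cases h1 : y.1 - x.1 = 0 <;> by_cases h2 : y.2 - x.2 = 0
    · rw [if_pos h1, if_pos h2,
        if_pos (by rw [sub_eq_zero] at h1 h2; exact Prod.ext h1.symm h2.symm)]
      field_simp
    · rw [if_pos h1, if_neg h2, if_neg (show ¬x = y from fun h => h2 (by rw [h, sub_self]))]
      ring
    · rw [if_neg h1, if_neg (show ¬x = y from fun h => h1 (by rw [h, sub_self]))]
      ring
    · rw [if_neg h1, if_neg (show ¬x = y from fun h => h1 (by rw [h, sub_self]))]
      ring
  -- G * F = 1
  have hGF : G * F = 1 := by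
    ext x y
    rw [Matrix.mul_apply, Matrix.one_apply]
    have hterm : ∀ kl : ZMod p × ZMod q,
        G x kl * F kl y =
          (1 / ((p : ℂ) * (q : ℂ))) *
            (ωp ^ ((x.1 - y.1) * kl.1).val * ωq ^ ((x.2 - y.2) * kl.2).val) := by
      intro kl
      have h1 : ωp ^ (x.1 * kl.1).val * ωp ^ (-(kl.1 * y.1)).val
          = ωp ^ ((x.1 - y.1) * kl.1).val := by
        rw [e_add hωp, show x.1 * kl.1 + -(kl.1 * y.1) = (x.1 - y.1) * kl.1 from by ring]
      have h2 : ωq ^ (x.2 * kl.2).val * ωq ^ (-(kl.2 * y.2)).val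
          = ωq ^ ((x.2 - y.2) * kl.2).val := by
        rw [e_add hωq, show x.2 * kl.2 + -(kl.2 * y.2) = (x.2 - y.2) * kl.2 from by ring]
      show ((1 / ((p : ℂ) * (q : ℂ))) * (ωp ^ (x.1 * kl.1).val * ωq ^ (x.2 * kl.2).val)) *
          (ωp ^ (-(kl.1 * y.1)).val * ωq ^ (-(kl.2 * y.2)).val) = _
      rw [← h1, ← h2]; ring
    rw [Finset.sum_congr rfl fun kl _ => hterm kl, orth2 hωp hωq]
    by_cases h1 : x.1 - y.1 = 0 <;> by_cases h2 : x.2 - y.2 = 0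
    · rw [if_pos h1, if_pos h2,
        if_pos (by rw [sub_eq_zero] at h1 h2; exact Prod.ext h1 h2)]
      field_simp
    · rw [if_pos h1, if_neg h2, if_neg (show ¬x = y from fun h => h2 (by rw [h, sub_self]))]
      ring
    · rw [if_neg h1, if_neg (show ¬x = y from fun h => h1 (by rw [h, sub_self]))]
      ring
    · rw [if_neg h1, if_neg (show ¬x = y from fun h => h1 (by rw [h, sub_self]))]
      ring
  -- entries of B
  have hBe : ∀ x y : ZMod p × ZMod q, B x y = α (y.1 - x.1, y.2 - x.2) := by
    intro x y
    rw [hB, Matrix.sum_apply]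
    rw [Finset.sum_eq_single (y.1 - x.1, y.2 - x.2)]
    · simp [Matrix.kroneckerMap_apply, Jpow, ZMod.natCast_zmod_val]
    · rintro ⟨b1, b2⟩ _ hb
      simp only [Matrix.smul_apply, Matrix.kroneckerMap_apply, Jpow,
        ZMod.natCast_zmod_val, smul_eq_mul]
      by_cases h1 : y.1 = x.1 + b1
      · by_cases h2 : y.2 = x.2 + b2
        · exact absurd (Prod.ext (by rw [h1]; ring) (by rw [h2]; ring)) hb
        · simp [h2]
      · simp [h1]
    · intro h
      exact absurd (Finset.mem_univ _) h
  -- eigen relation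
  have hBF : B * F = F * Matrix.diagonal lam := by
    ext x y
    rw [Matrix.mul_apply, Matrix.mul_diagonal]
    rw [← Fintype.sum_equiv (Equiv.addLeft x)
      (fun c => B x (x + c) * F (x + c) y) (fun z => B x z * F z y) (fun c => rfl)]
    rw [hlam, Finset.mul_sum]
    refine Finset.sum_congr rfl fun c _ => ?_
    have hBc : B x (x + c) = α c := by
      rw [hBe]
      simp
    have h1 : ωp ^ (-((x.1 + c.1) * y.1)).val
        = ωp ^ (-(x.1 * y.1)).val * ωp ^ (-(c.1 * y.1)).val := by
      rw [e_add hωp, show -(x.1 * y.1) + -(c.1 * y.1) = -((x.1 + c.1) * y.1) from by ring]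
    have h2 : ωq ^ (-((x.2 + c.2) * y.2)).val
        = ωq ^ (-(x.2 * y.2)).val * ωq ^ (-(c.2 * y.2)).val := by
      rw [e_add hωq, show -(x.2 * y.2) + -(c.2 * y.2) = -((x.2 + c.2) * y.2) from by ring]
    rw [hBc]
    show α c * (ωp ^ (-((x.1 + c.1) * y.1)).val * ωq ^ (-((x.2 + c.2) * y.2)).val) = _
    rw [h1, h2, star_mulval hωp, star_mulval hωq]
    show _ = (ωp ^ (-(x.1 * y.1)).val * ωq ^ (-(x.2 * y.2)).val) *
      (α c * ωp ^ (-(c.1 * y.1)).val * ωq ^ (-(c.2 * y.2)).val)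
    ring
  have hBdiag : B = F * Matrix.diagonal lam * G := by
    rw [← hBF, Matrix.mul_assoc, hFG, Matrix.mul_one]
  intro t i m j n
  set U : (Matrix (ZMod p × ZMod q) (ZMod p × ZMod q) ℂ)ˣ := ⟨F, G, hFG, hGF⟩ with hU
  have hsm : (t : ℂ) • B =
      (U : Matrix (ZMod p × ZMod q) (ZMod p × ZMod q) ℂ) *
        Matrix.diagonal (fun kl => (t : ℂ) * lam kl) *
        ((U⁻¹ : (Matrix (ZMod p × ZMod q) (ZMod p × ZMod q) ℂ)ˣ) :
          Matrix (ZMod p × ZMod q) (ZMod p × ZMod q) ℂ) := by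
    show (t : ℂ) • B = F * Matrix.diagonal (fun kl => (t : ℂ) * lam kl) * G
    have hd : (t : ℂ) • Matrix.diagonal lam
        = Matrix.diagonal (fun kl : ZMod p × ZMod q => (t : ℂ) * lam kl) := by
      rw [← Matrix.diagonal_smul]
      congr 1
    rw [hBdiag, ← Matrix.smul_mul, ← Matrix.mul_smul, hd]
  rw [hsm, Matrix.exp_units_conj U, Matrix.exp_diagonal]
  have hdiagexp : (NormedSpace.exp fun kl : ZMod p × ZMod q => (t : ℂ) * lam kl)
      = fun kl : ZMod p × ZMod q => Complex.exp (t * lam kl) := by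
    funext kl
    rw [Pi.coe_exp, ← Complex.exp_eq_exp_ℂ]
  rw [hdiagexp]
  show (F * Matrix.diagonal (fun kl : ZMod p × ZMod q => Complex.exp (↑t * lam kl)) * G)
      (i, j) (m, n) = _
  rw [Matrix.mul_apply]
  rw [Finset.sum_congr rfl fun kl (_ : kl ∈ Finset.univ) =>
    congrArg (· * G kl (m, n)) (Matrix.mul_diagonal _ _ _ _)]
  rw [hΦ, Finset.mul_sum]
  refine Finset.sum_congr rfl fun kl _ => ?_
  rcases kl with ⟨k, l⟩
  have h1 : ωp ^ (-(i * k)).val * ωp ^ (k * m).val = ωp ^ ((m - i) * k).val := by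
    rw [e_add hωp, show -(i * k) + k * m = (m - i) * k from by ring]
  have h2 : ωq ^ (-(j * l)).val * ωq ^ (l * n).val = ωq ^ ((n - j) * l).val := by
    rw [e_add hωq, show -(j * l) + l * n = (n - j) * l from by ring]
  show (ωp ^ (-(i * k)).val * ωq ^ (-(j * l)).val) * Complex.exp (t * lam (k, l)) *
      ((1 / ((p : ℂ) * (q : ℂ))) * (ωp ^ (k * m).val * ωq ^ (l * n).val)) = _
  rw [show ((1 : ℂ) / ((p : ℂ) * (q : ℂ))) *
      (ωp ^ ((m - i, n - j).1.val * (k, l).1.val) * ωq ^ ((m - i, n - j).2.val * (k, l).2.val)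
        * Complex.exp (t * lam (k, l))) = (1 / ((p : ℂ) * (q : ℂ))) *
      (ωp ^ ((m - i) * k).val * ωq ^ ((n - j) * l).val * Complex.exp (t * lam (k, l))) from by
    rw [e_mul hωp, e_mul hωq]]
  rw [← h1, ← h2]
  ring
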